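/- Let P be a proper parabolic subgroup of A[Ã_n], i.e., P = g ⟨X⟩ g^{-1} for some g ∈ A[Ã_n] and proper subset X ⊊ {t_0,...,t_n}. Then φ₀(P) is a parabolic subgroup of A[B_{n+1}], where φ₀ is the standard embedding of A[Ã_n] as ker ξ in A[B_{n+1}]. -/

import Mathlib

/-- Defining relations of the Artin group of type `B_{n+1}` on generators indexed by
`Fin (n+1)`; index `i` represents the paper's generator `r_{i+1}`. -/
def BRels (n : ℕ) : Set (FreeGroup (Fin (n + 1))) :=
  { x | ∃ i j : Fin (n + 1), (i : ℕ) + 1 = j ∧ (j : ℕ) < n ∧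
      x = .of i * .of j * .of i * (.of j * .of i * .of j)⁻¹ } ∪
  { x | n ≥ 1 ∧ x = .of (⟨n - 1, by omega⟩ : Fin (n + 1)) * .of ⟨n, by omega⟩ *
      .of ⟨n - 1, by omega⟩ * .of ⟨n, by omega⟩ *
      (.of (⟨n, by omega⟩ : Fin (n + 1)) * .of ⟨n - 1, by omega⟩ *
        .of ⟨n, by omega⟩ * .of ⟨n - 1, by omega⟩)⁻¹ } ∪
  { x | ∃ i j : Fin (n + 1), (i : ℕ) + 2 ≤ j ∧ x = .of i * .of j * (.of j * .of i)⁻¹ }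

/-- The Artin group of type `B_{n+1}`. -/
abbrev ArtinB (n : ℕ) := PresentedGroup (BRels n)

/-- The standard generator `r_{i+1}` of `A[B_{n+1}]`. -/
def rB (n : ℕ) (i : Fin (n + 1)) : ArtinB n := PresentedGroup.of i

/-- `ρ = r_1 r_2 ⋯ r_{n+1}`. -/
def ρB (n : ℕ) : ArtinB n := (List.ofFn fun i => rB n i).prod

/-- Defining relations of the Euclidean braid group `A[Ã_n]` on generators `t_0, …, t_n`
indexed cyclically by `Fin (n+1)`. -/
def ARels (n : ℕ) : Set (FreeGroup (Fin (n + 1))) :=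
  { x | ∃ i : Fin (n + 1), x = .of i * .of (i + 1) * .of i *
      (.of (i + 1) * .of i * .of (i + 1))⁻¹ } ∪
  { x | ∃ i j : Fin (n + 1), j ≠ i + 1 ∧ i ≠ j + 1 ∧ i ≠ j ∧
      x = .of i * .of j * (.of j * .of i)⁻¹ }

/-- The Euclidean braid group `A[Ã_n]`. -/
abbrev ArtinA (n : ℕ) := PresentedGroup (ARels n)

/-- The standard generator `t_i` of `A[Ã_n]`. -/
def tA (n : ℕ) (i : Fin (n + 1)) : ArtinA n := PresentedGroup.of i

/-- `r_0, r_1, …, r_n` in `A[B_{n+1}]`: for `i ≥ 1` this is the standard generator `r_i`,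
and `r_0 = ρ r_n ρ⁻¹`. -/
def rcyc (n : ℕ) (i : Fin (n + 1)) : ArtinB n :=
  if h : (i : ℕ) = 0 then ρB n * rB n ⟨n - 1, by omega⟩ * (ρB n)⁻¹
  else rB n ⟨(i : ℕ) - 1, by omega⟩

lemma relB_one {n : ℕ} {r : FreeGroup (Fin (n + 1))} (h : r ∈ BRels n) :
    (QuotientGroup.mk r : ArtinB n) = 1 :=
  (QuotientGroup.eq_one_iff r).mpr (Subgroup.subset_normalClosure h)

lemma rB_mk (n : ℕ) (i : Fin (n + 1)) : rB n i = QuotientGroup.mk (FreeGroup.of i) := rfl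

/-- generator with clamped natural index -/
def sB (n : ℕ) (i : ℕ) : ArtinB n := rB n ⟨min i n, by omega⟩

lemma sB_eq {n : ℕ} {i : ℕ} (h : i ≤ n) : sB n i = rB n ⟨i, by omega⟩ := by
  simp [sB, Nat.min_eq_left h]

lemma braidB {n : ℕ} {i : ℕ} (h : i + 1 < n) :
    sB n i * sB n (i+1) * sB n i = sB n (i+1) * sB n i * sB n (i+1) := by
  have hm : (FreeGroup.of (⟨i, by omega⟩ : Fin (n+1)) * .of ⟨i+1, by omega⟩ * .of ⟨i, by omega⟩ *
      (.of (⟨i+1, by omega⟩ : Fin (n+1)) * .of ⟨i, by omega⟩ * .of ⟨i+1, by omega⟩)⁻¹) ∈ BRels n := by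
    left; left
    exact ⟨⟨i, by omega⟩, ⟨i+1, by omega⟩, rfl, h, rfl⟩
  have := relB_one hm
  rw [sB_eq (by omega), sB_eq (by omega)]
  simp only [QuotientGroup.mk_mul, QuotientGroup.mk_inv, ← rB_mk] at this
  rw [mul_inv_eq_one] at this
  exact this

lemma commB {n : ℕ} {i j : ℕ} (h : i + 2 ≤ j) (hj : j ≤ n) :
    sB n i * sB n j = sB n j * sB n i := by
  have hm : (FreeGroup.of (⟨i, by omega⟩ : Fin (n+1)) * .of ⟨j, by omega⟩ *
      (.of (⟨j, by omega⟩ : Fin (n+1)) * .of ⟨i, by omega⟩)⁻¹) ∈ BRels n := by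
    right
    exact ⟨⟨i, by omega⟩, ⟨j, by omega⟩, h, rfl⟩
  have := relB_one hm
  rw [sB_eq (by omega), sB_eq hj]
  simp only [QuotientGroup.mk_mul, QuotientGroup.mk_inv, ← rB_mk] at this
  rw [mul_inv_eq_one] at this
  exact this

lemma brel4 {n : ℕ} (hn : 1 ≤ n) :
    sB n (n-1) * sB n n * sB n (n-1) * sB n n = sB n n * sB n (n-1) * sB n n * sB n (n-1) := by
  have hm : (FreeGroup.of (⟨n-1, by omega⟩ : Fin (n+1)) * .of ⟨n, by omega⟩ *
      .of ⟨n-1, by omega⟩ * .of ⟨n, by omega⟩ *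
      (.of (⟨n, by omega⟩ : Fin (n+1)) * .of ⟨n-1, by omega⟩ *
        .of ⟨n, by omega⟩ * .of ⟨n-1, by omega⟩)⁻¹) ∈ BRels n := by
    left; right
    exact ⟨hn, rfl⟩
  have := relB_one hm
  rw [sB_eq (by omega), sB_eq (le_refl n)]
  simp only [QuotientGroup.mk_mul, QuotientGroup.mk_inv, ← rB_mk] at this
  rw [mul_inv_eq_one] at this
  exact this

/-- product s_0 s_1 ⋯ s_{k-1} -/
def PB (n k : ℕ) : ArtinB n := ((List.range k).map (sB n)).prod
/-- product s_a s_{a+1} ⋯ s_{a+b-1} -/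
def QB (n a b : ℕ) : ArtinB n := ((List.range' a b).map (sB n)).prod

lemma PB_succ (n k : ℕ) : PB n (k+1) = PB n k * sB n k := by
  simp [PB, List.range_succ]

lemma QB_succ (n a b : ℕ) : QB n a (b+1) = sB n a * QB n (a+1) b := by
  simp [QB, List.range'_succ]

lemma QB_concat (n a b : ℕ) : QB n a (b+1) = QB n a b * sB n (a + b) := by
  simp [QB, List.range'_1_concat]

lemma PB_split (n k m : ℕ) : PB n (k + m) = PB n k * QB n k m := by
  unfold PB QB
  rw [List.range_eq_range', ← List.range'_append_1 (s := 0) (m := k) (n := m), List.map_append, List.prod_append,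
    Nat.zero_add, ← List.range_eq_range']

lemma commute_QB {n j a b : ℕ} (h : j + 2 ≤ a) (hb : a + b ≤ n + 1) :
    Commute (sB n j) (QB n a b) := by
  apply Commute.list_prod_right
  intro x hx
  simp only [List.mem_map, List.mem_range'_1] at hx
  obtain ⟨m, ⟨hm1, hm2⟩, rfl⟩ := hx
  exact commB (by omega) (by omega)

lemma commute_PB {n j k : ℕ} (h : k + 1 ≤ j) (hj : j ≤ n) :
    Commute (sB n j) (PB n k) := by
  apply Commute.list_prod_right
  intro x hx
  simp only [List.mem_map, List.mem_range] at hx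
  obtain ⟨m, hm, rfl⟩ := hx
  exact (commB (i := m) (by omega) hj).symm

lemma ρB_eq (n : ℕ) : ρB n = PB n (n+1) := by
  unfold ρB PB
  congr 1
  rw [List.ofFn_eq_map]
  apply List.ext_getElem
  · simp
  · intro i h1 h2
    simp only [List.getElem_map, List.getElem_finRange, List.getElem_range]
    rw [sB_eq (by simpa using (Nat.lt_succ_iff.mp (by simpa using h2)))]
    congr 1

lemma QB_succ' (n a b : ℕ) : QB n a (1+b) = sB n a * QB n (a+1) b := by
  rw [Nat.add_comm 1 b]; exact QB_succ n a b

lemma PB_zero (n : ℕ) : PB n 0 = 1 := by simp [PB]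
lemma QB_zero (n a : ℕ) : QB n a 0 = 1 := by simp [QB]
lemma QB_one (n a : ℕ) : QB n a 1 = sB n a := by simp [QB]

section auxg
variable {G : Type*} [Group G] (A x y Q : G)

lemma aux1 (h1 : x*Q = Q*x) (h2 : y*A = A*y) (h3 : x*y*x = y*x*y) :
    A*(x*(y*Q))*x = y*(A*(x*(y*Q))) := by
  calc A*(x*(y*Q))*x = A*x*y*(Q*x) := by group
    _ = A*x*y*(x*Q) := by rw [← h1]
    _ = A*(x*y*x)*Q := by group
    _ = A*(y*x*y)*Q := by rw [h3]
    _ = A*y*(x*(y*Q)) := by group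
    _ = y*A*(x*(y*Q)) := by rw [← h2]
    _ = y*(A*(x*(y*Q))) := by group

lemma aux2 (h2 : y*A = A*y) (h3 : x*y*x = y*x*y) :
    y⁻¹*(A*x*A⁻¹)*y = (A*x)*y*(A*x)⁻¹ := by
  have c : Commute y A := h2
  calc y⁻¹*(A*x*A⁻¹)*y = (y⁻¹*A)*x*(A⁻¹*y) := by group
    _ = (A*y⁻¹)*x*(y*A⁻¹) := by rw [c.inv_left.eq, c.inv_right.symm.eq]
    _ = A*(y⁻¹*(x*y*x)*x⁻¹)*A⁻¹ := by group
    _ = A*(y⁻¹*(y*x*y)*x⁻¹)*A⁻¹ := by rw [h3]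
    _ = (A*x)*y*(A*x)⁻¹ := by group

lemma aux3 (h2 : y*A = A*y) :
    y⁻¹*(A*x*A⁻¹)*y = A*(y⁻¹*x*y)*A⁻¹ := by
  have c : Commute y A := h2
  calc y⁻¹*(A*x*A⁻¹)*y = (y⁻¹*A)*x*(A⁻¹*y) := by group
    _ = (A*y⁻¹)*x*(y*A⁻¹) := by rw [c.inv_left.eq, c.inv_right.symm.eq]
    _ = A*(y⁻¹*x*y)*A⁻¹ := by group

lemma aux4 (h4 : x*y*x*y = y*x*y*x) : x*y*x*y⁻¹*x⁻¹ = y⁻¹*x*y := by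
  calc x*y*x*y⁻¹*x⁻¹ = y⁻¹*(y*x*y*x)*(y⁻¹*x⁻¹) := by group
    _ = y⁻¹*(x*y*x*y)*(y⁻¹*x⁻¹) := by rw [← h4]
    _ = y⁻¹*x*y := by group

end auxg

lemma claim1 {n j : ℕ} (h : j + 2 ≤ n) :
    ρB n * sB n j = sB n (j+1) * ρB n := by
  have hρ : ρB n = PB n j * (sB n j * (sB n (j+1) * QB n (j+2) (n-1-j))) := by
    rw [ρB_eq]
    have e : PB n (n + 1) = PB n (j + (1 + (1 + (n-1-j)))) := congrArg (PB n) (by omega)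
    rw [e, PB_split, QB_succ', QB_succ']
  rw [hρ]
  exact aux1 _ _ _ _ (commute_QB (le_refl _) (by omega)).eq
    (commute_PB (by omega) (by omega)).eq (braidB (by omega))

lemma conjQ1 {n : ℕ} (hn : 1 ≤ n) : ∀ k, k ≤ n - 1 →
    (QB n 1 k)⁻¹ * sB n 0 * QB n 1 k = PB n k * sB n k * (PB n k)⁻¹ := by
  intro k
  induction k with
  | zero => intro _; simp [QB_zero, PB_zero]
  | succ k ih =>
    intro hk
    have hQ : QB n 1 (k+1) = QB n 1 k * sB n (k+1) := by
      have := QB_concat n 1 k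
      rwa [Nat.add_comm 1 k] at this
    rw [hQ, PB_succ]
    have step : (QB n 1 k * sB n (k+1))⁻¹ * sB n 0 * (QB n 1 k * sB n (k+1))
        = (sB n (k+1))⁻¹ * ((QB n 1 k)⁻¹ * sB n 0 * QB n 1 k) * sB n (k+1) := by group
    rw [step, ih (by omega)]
    exact aux2 _ _ _ (commute_PB (le_refl _) (by omega)).eq (braidB (by omega))

lemma claim2 {n : ℕ} (hn : 2 ≤ n) :
    ρB n * sB n (n-1) * (ρB n)⁻¹ = (ρB n)⁻¹ * sB n 0 * ρB n := by
  -- ρ = PB (n-1) * (s(n-1) * s n)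
  have hM : ρB n = PB n (n-1) * (sB n (n-1) * sB n n) := by
    rw [ρB_eq]
    have e : PB n (n + 1) = PB n ((n-1) + (1 + 1)) := congrArg (PB n) (by omega)
    rw [e, PB_split, QB_succ', QB_one]
    have e2 : n - 1 + 1 = n := by omega
    rw [e2]
  -- ρ = s 0 * QB 1 n
  have h0 : ρB n = sB n 0 * QB n 1 n := by
    rw [ρB_eq]
    have e : PB n (n + 1) = PB n (1 + n) := congrArg (PB n) (by omega)
    rw [e, PB_split, PB_succ, PB_zero, one_mul]
  have hL : ρB n * sB n (n-1) * (ρB n)⁻¹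
      = PB n (n-1) * (sB n (n-1) * sB n n * sB n (n-1) * (sB n n)⁻¹ * (sB n (n-1))⁻¹)
        * (PB n (n-1))⁻¹ := by
    rw [hM]; group
  have hR1 : (ρB n)⁻¹ * sB n 0 * ρB n = (QB n 1 n)⁻¹ * sB n 0 * QB n 1 n := by
    rw [h0]; group
  have hQ : QB n 1 n = QB n 1 (n-1) * sB n n := by
    have := QB_concat n 1 (n-1)
    have e : 1 + (n - 1 + 1) = n + 1 := by omega  -- unused
    have e1 : n - 1 + 1 = n := by omega
    have e2 : 1 + (n-1) = n := by omega
    rw [e1, e2] at this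
    exact this
  have hc := conjQ1 (n := n) (by omega) (n-1) (le_refl _)
  have hR2 : (QB n 1 n)⁻¹ * sB n 0 * QB n 1 n
      = (sB n n)⁻¹ * ((QB n 1 (n-1))⁻¹ * sB n 0 * QB n 1 (n-1)) * sB n n := by
    rw [hQ]; group
  rw [hL, hR1, hR2, hc,
    aux3 (PB n (n-1)) (sB n (n-1)) (sB n n) (commute_PB (by omega) (by omega)).eq]
  congr 1
  congr 1
  -- core braid identity
  have h4 := brel4 (n := n) (by omega)
  exact aux4 _ _ h4

lemma rotB {n : ℕ} (hn : 2 ≤ n) (i : Fin (n+1)) :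
    ρB n * rcyc n i * (ρB n)⁻¹ = rcyc n (i+1) := by
  have hval : ((i+1 : Fin (n+1)) : ℕ) = ((i : ℕ) + 1) % (n+1) := by
    simp [Fin.add_def]
  rcases Nat.lt_or_ge (i : ℕ) n with hi | hi
  · have h1 : ((i+1 : Fin (n+1)) : ℕ) = (i : ℕ) + 1 := by
      rw [hval]; exact Nat.mod_eq_of_lt (by omega)
    rcases Nat.eq_zero_or_pos (i : ℕ) with h0 | h0
    · simp only [rcyc, h0, h1, dif_pos, dif_neg (by omega : ¬(0:ℕ)+1 = 0)]
      have hs : rB n (⟨n-1, by omega⟩ : Fin (n+1)) = sB n (n-1) := (sB_eq (by omega)).symm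
      have hs0 : rB n (⟨0+1-1, by omega⟩ : Fin (n+1)) = sB n 0 := (sB_eq (by omega)).symm
      rw [hs, hs0]
      have := claim2 (n := n) hn
      calc ρB n * (ρB n * sB n (n-1) * (ρB n)⁻¹) * (ρB n)⁻¹
          = ρB n * ((ρB n)⁻¹ * sB n 0 * ρB n) * (ρB n)⁻¹ := by rw [this]
        _ = sB n 0 := by group
    · simp only [rcyc, dif_neg (by omega : ¬(i:ℕ) = 0), h1,
        dif_neg (by omega : ¬(i:ℕ)+1 = 0)]
      have hs : rB n (⟨(i:ℕ)-1, by omega⟩ : Fin (n+1)) = sB n ((i:ℕ)-1) :=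
        (sB_eq (by omega)).symm
      have hs2 : rB n (⟨(i:ℕ)+1-1, by omega⟩ : Fin (n+1)) = sB n (((i:ℕ)-1)+1) := by
        rw [sB_eq (by omega)]
        congr 1
        exact Fin.ext (by simp; omega)
      rw [hs, hs2]
      have hc := claim1 (n := n) (j := (i:ℕ)-1) (by omega)
      rw [hc]; group
  · -- i = n
    have hin : (i : ℕ) = n := by omega
    have h1 : ((i+1 : Fin (n+1)) : ℕ) = 0 := by rw [hval, hin]; simp
    simp only [rcyc, dif_neg (by omega : ¬(i:ℕ) = 0), h1, dif_pos]
    have : (⟨(i:ℕ)-1, by omega⟩ : Fin (n+1)) = ⟨n-1, by omega⟩ := by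
      simp only [Fin.mk.injEq]; omega
    rw [this]

open Fin.NatCast in
lemma rot_pow {n : ℕ} (hn : 2 ≤ n) (m : ℕ) (i : Fin (n+1)) :
    ρB n ^ m * rcyc n i * (ρB n ^ m)⁻¹ = rcyc n (i + (m : Fin (n+1))) := by
  induction m with
  | zero => simp
  | succ m ih =>
    have e : ρB n ^ (m+1) * rcyc n i * (ρB n ^ (m+1))⁻¹
        = ρB n * (ρB n ^ m * rcyc n i * (ρB n ^ m)⁻¹) * (ρB n)⁻¹ := by
      rw [pow_succ']; group
    rw [e, ih, rotB hn]
    congr 1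
    push_cast
    abel


/-- A parabolic subgroup of `A[Ã_n]`: a conjugate of a subgroup generated by a subset of
the standard generators `t_0, …, t_n`. -/
def IsParabolicA (n : ℕ) (P : Subgroup (ArtinA n)) : Prop :=
  ∃ (g : ArtinA n) (X : Set (Fin (n + 1))),
    P = Subgroup.map (MulAut.conj g).toMonoidHom (Subgroup.closure (tA n '' X))

/-- A parabolic subgroup of `A[B_{n+1}]`: a conjugate of a subgroup generated by a subset
of the standard generators `r_1, …, r_{n+1}`. -/
def IsParabolicB (n : ℕ) (P : Subgroup (ArtinB n)) : Prop :=
  ∃ (h : ArtinB n) (Y : Set (Fin (n + 1))),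
    P = Subgroup.map (MulAut.conj h).toMonoidHom (Subgroup.closure (rB n '' Y))

/-- If `P = g ⟨X⟩ g⁻¹` is a proper parabolic subgroup of `A[Ã_n]`, then `φ₀(P)` is a
parabolic subgroup of `A[B_{n+1}]`. -/
theorem stmt11 (n : ℕ) (hn : 2 ≤ n)
    (φ₀ : ArtinA n →* ArtinB n) (hφ : ∀ i : Fin (n + 1), φ₀ (tA n i) = rcyc n i)
    (g : ArtinA n) (X : Set (Fin (n + 1))) (hX : X ≠ Set.univ) :
    IsParabolicB n (Subgroup.map φ₀
      (Subgroup.map (MulAut.conj g).toMonoidHom (Subgroup.closure (tA n '' X)))) := by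
  obtain ⟨k, hk⟩ : ∃ k, k ∉ X := by
    by_contra h
    push_neg at h
    exact hX (Set.eq_univ_iff_forall.mpr h)
  set c : ArtinB n := ρB n ^ (k : ℕ) with hcdef
  have hφg : ∀ i : Fin (n+1), i ≠ k →
      rcyc n i = c * rB n ⟨((i - k : Fin (n+1)) : ℕ) - 1,
        Nat.lt_of_le_of_lt (Nat.sub_le _ _) (i - k).isLt⟩ * c⁻¹ := by
    intro i hik
    have h1 : c * rcyc n (i - k) * c⁻¹ = rcyc n i := by
      rw [hcdef, rot_pow hn]
      congr 1
      rw [Fin.cast_val_eq_self]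
      abel
    rw [← h1]
    have hne : ((i - k : Fin (n+1)) : ℕ) ≠ 0 := by
      intro h0
      exact hik (sub_eq_zero.mp (Fin.ext h0))
    rw [rcyc, dif_neg hne]
  refine ⟨φ₀ g * c, (fun i : Fin (n+1) =>
      (⟨((i - k : Fin (n+1)) : ℕ) - 1,
        Nat.lt_of_le_of_lt (Nat.sub_le _ _) (i - k).isLt⟩ : Fin (n+1))) '' X, ?_⟩
  rw [Subgroup.map_map, MonoidHom.map_closure, MonoidHom.map_closure,
    Set.image_image, Set.image_image, Set.image_image]
  congr 1
  apply Set.image_congr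
  intro i hi
  have hik : i ≠ k := fun h => hk (h ▸ hi)
  simp only [MonoidHom.coe_comp, Function.comp_apply, MulEquiv.coe_toMonoidHom,
    MulAut.conj_apply]
  rw [map_mul, map_mul, map_inv, hφ i, hφg i hik]
  group
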